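/- Let k ≥ 1 and consider the hierarchical graph H_{2,…,2} (k copies of 2), whose vertices are binary strings of length k. For a vertex x, let x̄ denote the binary string obtained from x by interchanging 0's and 1's. If x = x_1…x_k is a vertex with x_k = 1, then the eccentricity of x equals alt(x̄) + k. -/

import Mathlib

/-- The value of the `j`-th coordinate (0-indexed) of the string `x`,
extended by `0` for positions `≥ k`. -/
def extVal (n : ℕ → ℕ) (k : ℕ) (x : ∀ i : Fin k, Fin (n i)) (j : ℕ) : ℕ :=
  if h : j < k then (x ⟨j, h⟩).val else 0

/-- The alternating number of the string `x`: the number of (0-indexed) positions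
`j ∈ {0,…,k-1}` such that exactly one of `x_j`, `x_{j+1}` is zero (with `x_k := 0`). -/
def altNum (n : ℕ → ℕ) (k : ℕ) (x : ∀ i : Fin k, Fin (n i)) : ℕ :=
  ((Finset.range k).filter (fun j =>
    (extVal n k x j = 0 ∧ extVal n k x (j + 1) ≠ 0) ∨
    (extVal n k x j ≠ 0 ∧ extVal n k x (j + 1) = 0))).card

/-- Adjacency in the hierarchical graph `H_{n_1,…,n_k}` (coordinates 0-indexed):
rule (A1): the two strings differ exactly in the first coordinate;
rule (A2): for some `j`, one string has its first `j+1` coordinates all zero, the other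
has its first `j+1` coordinates all nonzero, and they agree on the remaining coordinates;
rule (A3): for some `m ≥ 1`, both strings have their first `m` coordinates zero, their
`m`-th coordinates are distinct and nonzero, and they agree beyond position `m`. -/
def HierAdj (n : ℕ → ℕ) (k : ℕ) (x y : ∀ i : Fin k, Fin (n i)) : Prop :=
  x ≠ y ∧
    ((∀ i : Fin k, 0 < i.val → x i = y i) ∨
     (∃ j : Fin k,
       (((∀ i : Fin k, i.val ≤ j.val → (x i).val = 0) ∧
         (∀ i : Fin k, i.val ≤ j.val → (y i).val ≠ 0)) ∨
        ((∀ i : Fin k, i.val ≤ j.val → (y i).val = 0) ∧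
         (∀ i : Fin k, i.val ≤ j.val → (x i).val ≠ 0))) ∧
       (∀ i : Fin k, j.val < i.val → x i = y i)) ∨
     (∃ m : Fin k, 0 < m.val ∧
       (∀ i : Fin k, i.val < m.val → (x i).val = 0 ∧ (y i).val = 0) ∧
       (x m).val ≠ 0 ∧ (y m).val ≠ 0 ∧ x m ≠ y m ∧
       (∀ i : Fin k, m.val < i.val → x i = y i)))

/-- The hierarchical graph `H_{n_1,…,n_k}` as a simple graph on the strings
`x = x_1…x_k` with `x_i ∈ Z_{n_i}`. -/
def hierGraph (n : ℕ → ℕ) (k : ℕ) : SimpleGraph (∀ i : Fin k, Fin (n i)) where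
  Adj := HierAdj n k
  symm := ⟨by
    rintro x y ⟨hne, h⟩
    refine ⟨hne.symm, ?_⟩
    rcases h with h | ⟨j, hj, hag⟩ | ⟨m, hm, hpre, hx, hy, hxy, hs⟩
    · exact Or.inl fun i hi => (h i hi).symm
    · exact Or.inr (Or.inl ⟨j, hj.symm, fun i hi => (hag i hi).symm⟩)
    · exact Or.inr (Or.inr ⟨m, hm, fun i hi => ⟨(hpre i hi).2, (hpre i hi).1⟩,
        hy, hx, hxy.symm, fun i hi => (hs i hi).symm⟩)⟩
  loopless := ⟨fun x h => h.1 rfl⟩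

namespace Stmt9

open SimpleGraph Finset

variable {k : ℕ}

def ev (z : ∀ i : Fin k, Fin 2) (j : ℕ) : ℕ := extVal (fun _ => 2) k z j

lemma ev_eq (z : ∀ i : Fin k, Fin 2) {j : ℕ} (h : j < k) : ev z j = (z ⟨j, h⟩).val :=
  dif_pos h

lemma ev_lt2 (z : ∀ i : Fin k, Fin 2) {j : ℕ} (h : j < k) : ev z j < 2 := by
  rw [ev_eq z h]; exact (z ⟨j, h⟩).isLt

/-- number of change points among indices `i < j`. -/
def chg (z : ∀ i : Fin k, Fin 2) (j : ℕ) : ℕ :=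
  ((Finset.range j).filter (fun i => ev z i ≠ ev z (i + 1))).card

lemma chg_mono (z : ∀ i : Fin k, Fin 2) {j j' : ℕ} (h : j ≤ j') : chg z j ≤ chg z j' :=
  Finset.card_le_card (Finset.filter_subset_filter _ (Finset.range_subset_range.mpr h))

lemma chg_le (z : ∀ i : Fin k, Fin 2) (j : ℕ) : chg z j ≤ j :=
  le_trans (Finset.card_filter_le _ _) (le_of_eq (Finset.card_range j))

/-- the string with the first `j+1` coordinates flattened to the value of coordinate `j`. -/
def flat (z : ∀ i : Fin k, Fin 2) (j : ℕ) (hj : j < k) : ∀ i : Fin k, Fin 2 :=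
  fun i => if i.val ≤ j then z ⟨j, hj⟩ else z i

lemma adj_of {a b : ∀ i : Fin k, Fin 2} (m : Fin k)
    (h0 : ∀ i : Fin k, i.val ≤ m.val → (a i).val = 0)
    (h1 : ∀ i : Fin k, i.val ≤ m.val → (b i).val ≠ 0)
    (hag : ∀ i : Fin k, m.val < i.val → a i = b i) :
    (hierGraph (fun _ => 2) k).Adj a b := by
  refine ⟨fun he => h1 m le_rfl ?_, Or.inr (Or.inl ⟨m, Or.inl ⟨h0, h1⟩, hag⟩)⟩
  rw [← he]; exact h0 m le_rfl

/-- every edge of `H_{2,…,2}` flips a constant prefix. -/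
lemma adj_structure {a b : ∀ i : Fin k, Fin 2}
    (h : (hierGraph (fun _ => 2) k).Adj a b) :
    ∃ m : Fin k,
      (((∀ i : Fin k, i.val ≤ m.val → (a i).val = 0) ∧
        (∀ i : Fin k, i.val ≤ m.val → (b i).val = 1)) ∨
       ((∀ i : Fin k, i.val ≤ m.val → (a i).val = 1) ∧
        (∀ i : Fin k, i.val ≤ m.val → (b i).val = 0))) ∧
      (∀ i : Fin k, m.val < i.val → a i = b i) := by
  obtain ⟨hne, hcase⟩ := h
  have hk : 0 < k := by
    rcases Nat.eq_zero_or_pos k with h0 | h0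
    · exact absurd (funext fun i => absurd i.isLt (by omega)) hne
    · exact h0
  rcases hcase with h1 | ⟨j, hside, hag⟩ | ⟨m, _, _, hxm, hym, hxy, _⟩
  · refine ⟨⟨0, hk⟩, ?_, fun i hi => h1 i hi⟩
    have hab : a ⟨0, hk⟩ ≠ b ⟨0, hk⟩ := by
      intro he
      apply hne
      funext i
      rcases Nat.eq_zero_or_pos i.val with h0 | h0
      · have : i = ⟨0, hk⟩ := Fin.ext h0
        rw [this]; exact he
      · exact h1 i h0
    have ha2 : (a ⟨0, hk⟩).val < 2 := (a ⟨0, hk⟩).isLt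
    have hb2 : (b ⟨0, hk⟩).val < 2 := (b ⟨0, hk⟩).isLt
    have hvne : (a ⟨0, hk⟩).val ≠ (b ⟨0, hk⟩).val := fun hv => hab (Fin.ext hv)
    have hz : ∀ i : Fin k, i.val ≤ (⟨0, hk⟩ : Fin k).val → i = ⟨0, hk⟩ := by
      intro i hi
      have hi' : i.val ≤ 0 := hi
      exact Fin.ext (show i.val = (0:ℕ) by omega)
    rcases (show (a ⟨0, hk⟩).val = 0 ∨ (a ⟨0, hk⟩).val = 1 by omega) with ha | ha
    · left
      exact ⟨fun i hi => by rw [hz i hi]; exact ha, fun i hi => by rw [hz i hi]; omega⟩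
    · right
      exact ⟨fun i hi => by rw [hz i hi]; exact ha, fun i hi => by rw [hz i hi]; omega⟩
  · refine ⟨j, ?_, hag⟩
    rcases hside with ⟨hz, hnz⟩ | ⟨hz, hnz⟩
    · left
      exact ⟨hz, fun i hi => by have := hnz i hi; have h2 : (b i).val < 2 := (b i).isLt; omega⟩
    · right
      exact ⟨fun i hi => by have := hnz i hi; have h2 : (a i).val < 2 := (a i).isLt; omega, hz⟩
  · exfalso
    have h2a : (a m).val < 2 := (a m).isLt
    have h2b : (b m).val < 2 := (b m).isLt
    exact hxy (Fin.ext (by omega))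

lemma adj_flat {x y : ∀ i : Fin k, Fin 2} (j : ℕ) (hj : j < k)
    (hne : x ⟨j, hj⟩ ≠ y ⟨j, hj⟩)
    (hag : ∀ i : Fin k, j < i.val → x i = y i) :
    (hierGraph (fun _ => 2) k).Adj (flat x j hj) (flat y j hj) := by
  have hvne : (x ⟨j, hj⟩).val ≠ (y ⟨j, hj⟩).val := fun hv => hne (Fin.ext hv)
  have h2a : (x ⟨j, hj⟩).val < 2 := (x ⟨j, hj⟩).isLt
  have h2b : (y ⟨j, hj⟩).val < 2 := (y ⟨j, hj⟩).isLt
  have hpx : ∀ i : Fin k, i.val ≤ (⟨j, hj⟩ : Fin k).val → flat x j hj i = x ⟨j, hj⟩ := by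
    intro i hi; unfold flat; rw [if_pos hi]
  have hpy : ∀ i : Fin k, i.val ≤ (⟨j, hj⟩ : Fin k).val → flat y j hj i = y ⟨j, hj⟩ := by
    intro i hi; unfold flat; rw [if_pos hi]
  have hag' : ∀ i : Fin k, (⟨j, hj⟩ : Fin k).val < i.val → flat x j hj i = flat y j hj i := by
    intro i hi
    have hi' : j < i.val := hi
    unfold flat
    rw [if_neg (by omega), if_neg (by omega)]
    exact hag i hi'
  rcases (show (x ⟨j, hj⟩).val = 0 ∨ (x ⟨j, hj⟩).val = 1 by omega) with ha | ha
  · exact adj_of ⟨j, hj⟩ (fun i hi => by rw [hpx i hi]; exact ha)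
      (fun i hi => by rw [hpy i hi]; omega) hag'
  · exact SimpleGraph.Adj.symm
      (adj_of ⟨j, hj⟩ (fun i hi => by rw [hpy i hi]; omega)
        (fun i hi => by rw [hpx i hi]; omega) (fun i hi => (hag' i hi).symm))

lemma walk_flat : ∀ (j : ℕ) (hj : j < k) (z : ∀ i : Fin k, Fin 2),
    ∃ p : (hierGraph (fun _ => 2) k).Walk z (flat z j hj), p.length = chg z j := by
  intro j
  induction j with
  | zero =>
    intro hj z
    have hfl : z = flat z 0 hj := by
      funext i
      unfold flat
      split
      · next hle => congr 1; exact Fin.ext (show i.val = (0:ℕ) by omega)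
      · rfl
    refine ⟨(SimpleGraph.Walk.nil).copy rfl hfl, ?_⟩
    simp [chg]
  | succ j ih =>
    intro hj z
    have hj' : j < k := by omega
    obtain ⟨p, hp⟩ := ih hj' z
    by_cases hc : z ⟨j, hj'⟩ = z ⟨j + 1, hj⟩
    · have hfl : flat z j hj' = flat z (j + 1) hj := by
        funext i
        unfold flat
        rcases lt_trichotomy i.val (j + 1) with h | h | h
        · rw [if_pos (by omega : i.val ≤ j), if_pos (by omega : i.val ≤ j + 1)]
          exact hc
        · rw [if_neg (by omega), if_pos (by omega)]
          congr 1
          exact Fin.ext h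
        · rw [if_neg (by omega), if_neg (by omega)]
      have hcc : chg z (j + 1) = chg z j := by
        unfold chg
        rw [Finset.range_add_one, Finset.filter_insert, if_neg]
        simp only [ne_eq, not_not]
        rw [ev_eq z hj', ev_eq z hj, hc]
      exact ⟨p.copy rfl hfl, by simp [hp, hcc]⟩
    · have hyj : flat z (j + 1) hj ⟨j, hj'⟩ = z ⟨j + 1, hj⟩ := by
        unfold flat; rw [if_pos (show ((⟨j, hj'⟩ : Fin k)).val ≤ j + 1 from Nat.le_succ j)]
      have hagzw : ∀ i : Fin k, j < i.val → z i = flat z (j + 1) hj i := by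
        intro i hi
        unfold flat
        rcases eq_or_lt_of_le (Nat.succ_le_of_lt hi) with h | h
        · rw [if_pos (by omega)]
          congr 1
          exact Fin.ext (show i.val = j + 1 from h.symm)
        · rw [if_neg (by omega)]
      have hflw : flat (flat z (j + 1) hj) j hj' = flat z (j + 1) hj := by
        funext i
        unfold flat
        split
        · next hle => rw [if_pos (show ((⟨j, hj'⟩ : Fin k)).val ≤ j + 1 from Nat.le_succ j), if_pos (by omega : i.val ≤ j + 1)]
        · rfl
      have hadj := adj_flat (x := z) (y := flat z (j + 1) hj) j hj'
        (by rw [hyj]; exact hc) hagzw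
      rw [hflw] at hadj
      have hev : ev z j ≠ ev z (j + 1) := by
        rw [ev_eq z hj', ev_eq z hj]
        exact fun hv => hc (Fin.ext hv)
      have hcc : chg z (j + 1) = chg z j + 1 := by
        unfold chg
        rw [Finset.range_add_one, Finset.filter_insert, if_pos hev,
          Finset.card_insert_of_notMem (by simp)]
      exact ⟨p.concat hadj, by simp [hp, hcc]⟩

def diffTop (z w : ∀ i : Fin k, Fin 2) (h : z ≠ w) : Fin k :=
  (Finset.univ.filter (fun i => ¬ z i = w i)).max' (by
    obtain ⟨i, hi⟩ := Function.ne_iff.mp h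
    exact ⟨i, Finset.mem_filter.mpr ⟨Finset.mem_univ _, hi⟩⟩)

lemma diffTop_ne {z w : ∀ i : Fin k, Fin 2} (h : z ≠ w) :
    z (diffTop z w h) ≠ w (diffTop z w h) := by
  unfold diffTop
  exact (Finset.mem_filter.mp
    (Finset.max'_mem (Finset.univ.filter (fun i => ¬ z i = w i)) _)).2

lemma diffTop_le {z w : ∀ i : Fin k, Fin 2} (h : z ≠ w) {i : Fin k} (hi : z i ≠ w i) :
    i.val ≤ (diffTop z w h).val := by
  unfold diffTop
  exact Finset.le_max' _ i (Finset.mem_filter.mpr ⟨Finset.mem_univ _, hi⟩)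

lemma diffTop_agree {z w : ∀ i : Fin k, Fin 2} (h : z ≠ w) {i : Fin k}
    (hi : (diffTop z w h).val < i.val) : z i = w i := by
  by_contra hne
  exact absurd (diffTop_le h hne) (by omega)

lemma exists_walk (x y : ∀ i : Fin k, Fin 2) (hxy : x ≠ y) :
    ∃ p : (hierGraph (fun _ => 2) k).Walk x y,
      p.length = chg x (diffTop x y hxy).val + 1 + chg y (diffTop x y hxy).val := by
  set J := diffTop x y hxy with hJ
  obtain ⟨p1, hp1⟩ := walk_flat J.val J.isLt x
  obtain ⟨p2, hp2⟩ := walk_flat J.val J.isLt y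
  have hJeta : (⟨J.val, J.isLt⟩ : Fin k) = J := Fin.ext rfl
  have hadj : (hierGraph (fun _ => 2) k).Adj (flat x J.val J.isLt) (flat y J.val J.isLt) := by
    refine adj_flat J.val J.isLt ?_ ?_
    · rw [hJeta]; exact diffTop_ne hxy
    · intro i hi
      exact diffTop_agree hxy hi
  refine ⟨p1.append (SimpleGraph.Walk.cons hadj p2.reverse), ?_⟩
  simp [hp1, hp2]
  omega

lemma dist_upper (x y : ∀ i : Fin k, Fin 2) :
    (hierGraph (fun _ => 2) k).dist x y ≤ chg x (k - 1) + k := by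
  by_cases h : x = y
  · subst h
    rw [SimpleGraph.dist_self]
    exact Nat.zero_le _
  · obtain ⟨p, hp⟩ := exists_walk x y h
    have hd := SimpleGraph.dist_le p
    have hk1 : 0 < k := lt_of_le_of_lt (Nat.zero_le _) (diffTop x y h).isLt
    have h1 : chg x (diffTop x y h).val ≤ chg x (k - 1) :=
      chg_mono x (by have := (diffTop x y h).isLt; omega)
    have h2 : chg y (diffTop x y h).val ≤ k - 1 :=
      le_trans (chg_le y _) (by have := (diffTop x y h).isLt; omega)
    omega

def ystar (k : ℕ) : ∀ i : Fin k, Fin 2 :=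
  fun i => if (k - 1 - i.val) % 2 = 0 then 0 else 1

lemma ystar_alt {i j : Fin k} (hij : j.val = i.val + 1) :
    (ystar k i).val ≠ (ystar k j).val := by
  have hjk : j.val < k := j.isLt
  unfold ystar
  have hstep : k - 1 - i.val = (k - 1 - j.val) + 1 := by omega
  rw [hstep]
  by_cases hpar : (k - 1 - j.val) % 2 = 0
  · rw [if_pos hpar, if_neg (by omega)]
    decide
  · rw [if_neg hpar, if_pos (by omega)]
    decide

lemma ystar_last (hk : 0 < k) : (ystar k ⟨k - 1, by omega⟩).val = 0 := by
  show (if (k - 1 - (k - 1)) % 2 = 0 then (0 : Fin 2) else 1).val = 0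
  rw [if_pos (by omega)]
  rfl

def hpot (z : ∀ i : Fin k, Fin 2) : ℕ :=
  if h : z = ystar k then 0
  else 1 + chg z (diffTop z (ystar k) h).val + (diffTop z (ystar k) h).val

lemma hpot_eq : hpot (ystar k) = 0 := dif_pos rfl

lemma hpot_ne {z : ∀ i : Fin k, Fin 2} (h : z ≠ ystar k) :
    hpot z = 1 + chg z (diffTop z (ystar k) h).val + (diffTop z (ystar k) h).val :=
  dif_neg h

lemma hpot_lip {a b : ∀ i : Fin k, Fin 2}
    (hadj : (hierGraph (fun _ => 2) k).Adj a b) : hpot a ≤ hpot b + 1 := by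
  obtain ⟨m, hside, hag⟩ := adj_structure hadj
  obtain ⟨ca, cb, hca, hcb, hcne, hca2, hcb2⟩ :
      ∃ ca cb : ℕ, (∀ i : Fin k, i.val ≤ m.val → (a i).val = ca) ∧
        (∀ i : Fin k, i.val ≤ m.val → (b i).val = cb) ∧ ca ≠ cb ∧ ca < 2 ∧ cb < 2 := by
    rcases hside with ⟨h1, h2⟩ | ⟨h1, h2⟩
    · exact ⟨0, 1, h1, h2, by omega, by omega, by omega⟩
    · exact ⟨1, 0, h1, h2, by omega, by omega, by omega⟩
  by_cases hfar : ∃ i : Fin k, m.val < i.val ∧ a i ≠ ystar k i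
  · obtain ⟨i0, hi0m, hi0⟩ := hfar
    have hbi0 : b i0 ≠ ystar k i0 := by rw [← hag i0 hi0m]; exact hi0
    have hane : a ≠ ystar k := fun he => hi0 (congrFun he i0)
    have hbne : b ≠ ystar k := fun he => hbi0 (congrFun he i0)
    have hJam : m.val < (diffTop a (ystar k) hane).val :=
      lt_of_lt_of_le hi0m (diffTop_le hane hi0)
    have hJbm : m.val < (diffTop b (ystar k) hbne).val :=
      lt_of_lt_of_le hi0m (diffTop_le hbne hbi0)
    have hJab : diffTop a (ystar k) hane = diffTop b (ystar k) hbne := by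
      have h1 : (diffTop a (ystar k) hane).val ≤ (diffTop b (ystar k) hbne).val :=
        diffTop_le hbne (by rw [← hag _ hJam]; exact diffTop_ne hane)
      have h2 : (diffTop b (ystar k) hbne).val ≤ (diffTop a (ystar k) hane).val :=
        diffTop_le hane (by rw [hag _ hJbm]; exact diffTop_ne hbne)
      exact Fin.ext (le_antisymm h1 h2)
    rw [hpot_ne hane, hpot_ne hbne, hJab]
    have hJk := (diffTop b (ystar k) hbne).isLt
    rw [hJab] at hJam
    have hsub : ((Finset.range (diffTop b (ystar k) hbne).val).filter
          (fun i => ev a i ≠ ev a (i + 1))) ⊆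
        insert m.val ((Finset.range (diffTop b (ystar k) hbne).val).filter
          (fun i => ev b i ≠ ev b (i + 1))) := by
      intro i hi
      rw [Finset.mem_filter, Finset.mem_range] at hi
      obtain ⟨hiJ, hia⟩ := hi
      have hik : i < k := lt_trans hiJ hJk
      have hik1 : i + 1 < k := lt_of_le_of_lt hiJ hJk
      rcases lt_trichotomy i m.val with h | h | h
      · exfalso
        apply hia
        rw [ev_eq a hik, ev_eq a hik1, hca ⟨i, hik⟩ (show i ≤ m.val by omega),
          hca ⟨i + 1, hik1⟩ (show i + 1 ≤ m.val by omega)]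
      · rw [h]; exact Finset.mem_insert_self _ _
      · refine Finset.mem_insert_of_mem ?_
        rw [Finset.mem_filter, Finset.mem_range]
        refine ⟨hiJ, fun hv => hia ?_⟩
        rw [ev_eq a hik, ev_eq a hik1, hag ⟨i, hik⟩ (show m.val < i from h),
          hag ⟨i + 1, hik1⟩ (show m.val < i + 1 by omega), ← ev_eq b hik, ← ev_eq b hik1]
        exact hv
    have hcard : chg a (diffTop b (ystar k) hbne).val ≤
        chg b (diffTop b (ystar k) hbne).val + 1 := by
      unfold chg
      exact le_trans (Finset.card_le_card hsub) (Finset.card_insert_le _ _)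
    omega
  · push_neg at hfar
    by_cases ha : a = ystar k
    · rw [ha, hpot_eq]
      exact Nat.zero_le _
    · have hfarb : ∀ i : Fin k, m.val < i.val → b i = ystar k i :=
        fun i hi => ((hag i hi).symm).trans (hfar i hi)
      have hJam : (diffTop a (ystar k) ha).val ≤ m.val := by
        by_contra hlt
        exact (diffTop_ne ha) (hfar _ (by omega))
      have hchga : chg a (diffTop a (ystar k) ha).val = 0 := by
        unfold chg
        rw [Finset.card_eq_zero, Finset.filter_eq_empty_iff]
        intro i hi
        rw [Finset.mem_range] at hi
        have hik : i < k := lt_trans hi (diffTop a (ystar k) ha).isLt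
        have hik1 : i + 1 < k := lt_of_le_of_lt hi (diffTop a (ystar k) ha).isLt
        push_neg
        rw [ev_eq a hik, ev_eq a hik1, hca ⟨i, hik⟩ (show i ≤ m.val by omega),
          hca ⟨i + 1, hik1⟩ (show i + 1 ≤ m.val by omega)]
      by_cases hb : b = ystar k
      · have hm0 : m.val = 0 := by
          by_contra hm
          have h1k : 1 < k := lt_of_le_of_lt (by omega : 1 ≤ m.val) m.isLt
          have h0 : (b ⟨0, by omega⟩).val = cb := hcb _ (show (0:ℕ) ≤ m.val by omega)
          have h1 : (b ⟨1, h1k⟩).val = cb := hcb _ (show (1:ℕ) ≤ m.val by omega)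
          have halt := ystar_alt (i := ⟨0, by omega⟩) (j := ⟨1, h1k⟩) rfl
          rw [hb] at h0 h1
          omega
        have hJ0 : (diffTop a (ystar k) ha).val = 0 := by omega
        rw [hpot_ne ha, hchga, hJ0, hb, hpot_eq]
      · have hJbm : (diffTop b (ystar k) hb).val ≤ m.val := by
          by_contra hlt
          exact (diffTop_ne hb) (hfarb _ (by omega))
        have hchgb : chg b (diffTop b (ystar k) hb).val = 0 := by
          unfold chg
          rw [Finset.card_eq_zero, Finset.filter_eq_empty_iff]
          intro i hi
          rw [Finset.mem_range] at hi
          have hik : i < k := lt_trans hi (diffTop b (ystar k) hb).isLt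
          have hik1 : i + 1 < k := lt_of_le_of_lt hi (diffTop b (ystar k) hb).isLt
          push_neg
          rw [ev_eq b hik, ev_eq b hik1, hcb ⟨i, hik⟩ (show i ≤ m.val by omega),
            hcb ⟨i + 1, hik1⟩ (show i + 1 ≤ m.val by omega)]
        have hJle : (diffTop a (ystar k) ha).val ≤ (diffTop b (ystar k) hb).val + 1 := by
          by_contra hgt
          push_neg at hgt
          have hJa2 : 2 ≤ (diffTop a (ystar k) ha).val := by omega
          have hpk : (diffTop a (ystar k) ha).val - 1 < k := by
            have := (diffTop a (ystar k) ha).isLt; omega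
          have e1 : (ystar k ⟨(diffTop a (ystar k) ha).val - 1, hpk⟩).val = cb := by
            rw [← diffTop_agree hb
              (show (diffTop b (ystar k) hb).val < (diffTop a (ystar k) ha).val - 1 by omega)]
            exact hcb _ (show (diffTop a (ystar k) ha).val - 1 ≤ m.val by omega)
          have e2 : (ystar k (diffTop a (ystar k) ha)).val = cb := by
            rw [← diffTop_agree hb
              (show (diffTop b (ystar k) hb).val < (diffTop a (ystar k) ha).val by omega)]
            exact hcb _ hJam
          have halt := ystar_alt (i := ⟨(diffTop a (ystar k) ha).val - 1, hpk⟩)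
            (j := diffTop a (ystar k) ha)
            (show (diffTop a (ystar k) ha).val = ((diffTop a (ystar k) ha).val - 1) + 1 by omega)
          omega
        rw [hpot_ne ha, hpot_ne hb, hchga, hchgb]
        omega

lemma hpot_walk {u v : ∀ i : Fin k, Fin 2} (p : (hierGraph (fun _ => 2) k).Walk u v) :
    hpot u ≤ hpot v + p.length := by
  induction p with
  | nil => simp
  | cons h p ih =>
    have := hpot_lip h
    rw [SimpleGraph.Walk.length_cons]
    omega

lemma flipVal (t : Fin 2) : ((1 - t : Fin 2)).val = 1 - t.val := by fin_cases t <;> rfl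

lemma ev_bar (x : ∀ i : Fin k, Fin 2) {j : ℕ} (h : j < k) :
    extVal (fun _ => 2) k (fun i => 1 - x i) j = 1 - ev x j := by
  rw [show extVal (fun _ => 2) k (fun i => 1 - x i) j = ((1 - x ⟨j, h⟩ : Fin 2)).val
      from dif_pos h, ev_eq x h]
  exact flipVal _

lemma altNum_bar (hk : 1 ≤ k) (x : ∀ i : Fin k, Fin 2)
    (hxk : (x ⟨k - 1, Nat.sub_lt hk Nat.one_pos⟩).val = 1) :
    altNum (fun _ => 2) k (fun i => 1 - x i) = chg x (k - 1) := by
  have hklt : k - 1 < k := by omega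
  have hx1 : ev x (k - 1) = 1 := by rw [ev_eq x hklt]; exact hxk
  unfold altNum chg
  congr 1
  ext j
  simp only [Finset.mem_filter, Finset.mem_range]
  constructor
  · rintro ⟨hjk, hP⟩
    rcases lt_trichotomy j (k - 1) with h | h | h
    · have hj1 : j + 1 < k := by omega
      rw [ev_bar x (show j < k by omega), ev_bar x hj1] at hP
      have h1 := ev_lt2 x (show j < k by omega)
      have h2 := ev_lt2 x hj1
      exact ⟨h, by omega⟩
    · exfalso
      subst h
      rw [ev_bar x hklt,
        show extVal (fun _ => 2) k (fun i => 1 - x i) (k - 1 + 1) = 0 from dif_neg (by omega),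
        hx1] at hP
      omega
    · exact absurd hjk (by omega)
  · rintro ⟨hjk, hne⟩
    have hj1 : j + 1 < k := by omega
    refine ⟨by omega, ?_⟩
    rw [ev_bar x (show j < k by omega), ev_bar x hj1]
    have h1 := ev_lt2 x (show j < k by omega)
    have h2 := ev_lt2 x hj1
    omega

end Stmt9

/-- In the binomial tree `H_{2,…,2}` (k copies of 2), if `x_k = 1` then the eccentricity
of `x` equals `alt(x̄) + k`, where `x̄` interchanges 0's and 1's. -/
theorem stmt_9 (k : ℕ) (hk : 1 ≤ k) (x : ∀ i : Fin k, Fin 2)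
    (hxk : (x ⟨k - 1, by omega⟩).val = 1) :
    (Finset.univ.sup fun y : ∀ i : Fin k, Fin 2 =>
        (hierGraph (fun _ => 2) k).dist x y) =
      altNum (fun _ => 2) k (fun i => 1 - x i) + k := by
  rw [Stmt9.altNum_bar hk x hxk]
  have hklt : k - 1 < k := by omega
  have hx1 : (x ⟨k - 1, hklt⟩).val = 1 := hxk
  have hy0 : (Stmt9.ystar k ⟨k - 1, hklt⟩).val = 0 := Stmt9.ystar_last (by omega)
  have hxne : x ≠ Stmt9.ystar k := fun he => by
    have h2 := congrFun he ⟨k - 1, hklt⟩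
    rw [h2] at hx1
    omega
  have hJtop : (Stmt9.diffTop x (Stmt9.ystar k) hxne).val = k - 1 := by
    have hle : k - 1 ≤ (Stmt9.diffTop x (Stmt9.ystar k) hxne).val :=
      Stmt9.diffTop_le hxne (i := ⟨k - 1, hklt⟩) (fun he => by rw [he] at hx1; omega)
    have := (Stmt9.diffTop x (Stmt9.ystar k) hxne).isLt
    omega
  have hhx : Stmt9.hpot x = 1 + Stmt9.chg x (k - 1) + (k - 1) := by
    rw [Stmt9.hpot_ne hxne, hJtop]
  obtain ⟨q, hq⟩ := Stmt9.exists_walk x (Stmt9.ystar k) hxne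
  have hreach : (hierGraph (fun _ => 2) k).Reachable x (Stmt9.ystar k) := ⟨q⟩
  obtain ⟨p, hp⟩ := hreach.exists_walk_length_eq_dist
  have hlow := Stmt9.hpot_walk p
  rw [Stmt9.hpot_eq, hp] at hlow
  apply le_antisymm
  · exact Finset.sup_le fun y _ => Stmt9.dist_upper x y
  · have hsup : (hierGraph (fun _ => 2) k).dist x (Stmt9.ystar k) ≤
        Finset.univ.sup fun y : ∀ i : Fin k, Fin 2 => (hierGraph (fun _ => 2) k).dist x y :=
      Finset.le_sup (Finset.mem_univ _)
    omega
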